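/- Let X and Y be discrete random variables with finite support, independent of each other, and let f(X,Y) be a non-negative function. Then E_X[ ln( E_Y[ exp(-f(X,Y)) ] ) ] \geq ln( E_Y[ exp( - E_X[ f(X,Y) ] ) ] ). -/

import Mathlib

theorem stmt_5 {α β : Type*} [Fintype α] [Fintype β]
    (p : α → ℝ) (q : β → ℝ)
    (hp0 : ∀ a, 0 ≤ p a) (hq0 : ∀ b, 0 ≤ q b)
    (hp1 : ∑ a, p a = 1) (hq1 : ∑ b, q b = 1)
    (f : α → β → ℝ) (hf : ∀ a b, 0 ≤ f a b) :
    ∑ a, p a * Real.log (∑ b, q b * Real.exp (-(f a b))) ≥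
      Real.log (∑ b, q b * Real.exp (-(∑ a, p a * f a b))) := by
  classical
  set g : α → β → ℝ := fun a b => Real.exp (-(f a b)) with hg
  set S : α → ℝ := fun a => ∑ b, q b * g a b with hSdef
  obtain ⟨b0, hb0⟩ : ∃ b, 0 < q b := by
    by_contra h
    push_neg at h
    have : ∑ b, q b = 0 := Finset.sum_eq_zero fun b _ => le_antisymm (h b) (hq0 b)
    simp [this] at hq1
  have hS : ∀ a, 0 < S a := by
    intro a
    apply Finset.sum_pos' (fun b _ => mul_nonneg (hq0 b) (Real.exp_pos _).le)
    exact ⟨b0, Finset.mem_univ b0, mul_pos hb0 (Real.exp_pos _)⟩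
  set P : ℝ := ∏ a, S a ^ (p a) with hPdef
  have hP : 0 < P := Finset.prod_pos fun a _ => Real.rpow_pos_of_pos (hS a) _
  -- weighted AM-GM per b
  have h1 : ∀ b, ∏ a, (g a b / S a) ^ (p a) ≤ ∑ a, p a * (g a b / S a) := fun b =>
    Real.geom_mean_le_arith_mean_weighted Finset.univ p (fun a => g a b / S a)
      (fun a _ => hp0 a) hp1 (fun a _ => div_nonneg (Real.exp_pos _).le (hS a).le)
  have swap : ∑ b, q b * ∑ a, p a * (g a b / S a)
      = ∑ a, ∑ b, q b * (p a * (g a b / S a)) := by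
    simp_rw [Finset.mul_sum]
    exact Finset.sum_comm
  have inner : ∀ a, ∑ b, q b * (p a * (g a b / S a)) = p a := by
    intro a
    have h : ∑ b, q b * (p a * (g a b / S a)) = (p a / S a) * ∑ b, q b * g a b := by
      rw [Finset.mul_sum]
      exact Finset.sum_congr rfl fun b _ => by ring
    rw [h]
    have : (∑ b, q b * g a b) = S a := rfl
    rw [this, div_mul_cancel₀ _ (hS a).ne']
  have h2 : ∑ b, q b * ∏ a, (g a b / S a) ^ (p a) ≤ 1 := by
    calc ∑ b, q b * ∏ a, (g a b / S a) ^ (p a)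
        ≤ ∑ b, q b * ∑ a, p a * (g a b / S a) :=
          Finset.sum_le_sum fun b _ => mul_le_mul_of_nonneg_left (h1 b) (hq0 b)
      _ = ∑ a, p a := by
          rw [swap]; exact Finset.sum_congr rfl fun a _ => inner a
      _ = 1 := hp1
  have hprod : ∀ b, ∏ a, (g a b / S a) ^ (p a) = (∏ a, (g a b) ^ (p a)) / P := by
    intro b
    rw [hPdef, ← Finset.prod_div_distrib]
    exact Finset.prod_congr rfl fun a _ => Real.div_rpow (show (0:ℝ) ≤ g a b from (Real.exp_pos _).le) (hS a).le _
  have key : ∑ b, q b * ∏ a, (g a b) ^ (p a) ≤ P := by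
    rw [← div_le_one hP, Finset.sum_div]
    calc ∑ b, (q b * ∏ a, (g a b) ^ (p a)) / P
        = ∑ b, q b * ∏ a, (g a b / S a) ^ (p a) := by
          refine Finset.sum_congr rfl fun b _ => ?_
          rw [hprod b]; ring
      _ ≤ 1 := h2
  have hexp : ∀ b, Real.exp (-(∑ a, p a * f a b)) = ∏ a, (g a b) ^ (p a) := by
    intro b
    have h3 : ∀ a, (g a b) ^ (p a) = Real.exp ((-(f a b)) * p a) := fun a => by
      rw [hg, Real.rpow_def_of_pos (Real.exp_pos _), Real.log_exp]
    simp_rw [h3, ← Real.exp_sum]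
    congr 1
    rw [← Finset.sum_neg_distrib]
    exact Finset.sum_congr rfl fun a _ => by ring
  have hposL : 0 < ∑ b, q b * ∏ a, (g a b) ^ (p a) := by
    apply Finset.sum_pos' (fun b _ => mul_nonneg (hq0 b)
      (Finset.prod_nonneg fun a _ => Real.rpow_nonneg (Real.exp_pos _).le _))
    exact ⟨b0, Finset.mem_univ b0, mul_pos hb0
      (Finset.prod_pos fun a _ => Real.rpow_pos_of_pos (Real.exp_pos _) _)⟩
  have hlog : Real.log P = ∑ a, p a * Real.log (S a) := by
    rw [hPdef, Real.log_prod (fun a _ => (Real.rpow_pos_of_pos (hS a) _).ne')]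
    exact Finset.sum_congr rfl fun a _ => Real.log_rpow (hS a) _
  show Real.log (∑ b, q b * Real.exp (-(∑ a, p a * f a b))) ≤ ∑ a, p a * Real.log (S a)
  calc Real.log (∑ b, q b * Real.exp (-(∑ a, p a * f a b)))
      = Real.log (∑ b, q b * ∏ a, (g a b) ^ (p a)) := by
        congr 1; exact Finset.sum_congr rfl fun b _ => by rw [hexp b]
    _ ≤ Real.log P := Real.log_le_log hposL key
    _ = ∑ a, p a * Real.log (S a) := hlog
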